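/- Let b : D → D be holomorphic, α unimodular, σ_α the Clark measure of b. For g ∈ L²(σ_α) define (V g)(z) = (1 − conj(α) b(z)) · ∫_T g(ζ)/(1 − z conj(ζ)) dσ_α(ζ) for z ∈ D. Then V C(·,w) = (1 − α conj(b(w)))^{-1} k_b(·,w) for every w ∈ D, where C(ζ,w) = 1/(1 − ζ conj(w)) and k_b is the reproducing kernel of H(b). -/

import Mathlib

open Complex Metric MeasureTheory Set

lemma one_sub_ne {x : ℂ} (hx : ‖x‖ < 1) : (1:ℂ) - x ≠ 0 := by
  intro h
  have : x = 1 := by linear_combination -h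
  simp [this] at hx

lemma aux_re (u : ℂ) (h1 : (1:ℂ) - u ≠ 0) :
    2 * ((1 - u)⁻¹).re - 1 = (1 - ‖u‖^2)/‖1-u‖^2 := by
  have hns : ‖(1-u)‖ ^ 2 ≠ 0 := pow_ne_zero 2 (norm_ne_zero_iff.mpr h1)
  have h2 : ‖(1 - u)‖ ^ 2 = 1 - 2*u.re + ‖u‖ ^ 2 := by
    rw [Complex.sq_norm, Complex.sq_norm]
    simp [Complex.normSq_apply, Complex.sub_re, Complex.sub_im]; ring
  rw [Complex.inv_re, ← Complex.sq_norm]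
  simp only [Complex.sub_re, Complex.one_re]
  field_simp
  linear_combination -h2

lemma norm_prod_eq {z ζ : ℂ} (hζ : ‖ζ‖ = 1) : ‖z * (starRingEnd ℂ) ζ‖ = ‖z‖ := by
  rw [norm_mul, RCLike.norm_conj, hζ, mul_one]

lemma norm_one_sub_ge {z ζ : ℂ} (hζ : ‖ζ‖ = 1) :
    1 - ‖z‖ ≤ ‖1 - z * (starRingEnd ℂ) ζ‖ := by
  have := norm_sub_norm_le (1:ℂ) (z * (starRingEnd ℂ) ζ)
  rw [norm_one, norm_prod_eq hζ] at this
  exact this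

lemma norm_one_sub_eq {z ζ : ℂ} (hζ : ‖ζ‖ = 1) :
    ‖1 - z * (starRingEnd ℂ) ζ‖ = ‖ζ - z‖ := by
  have h1 : (starRingEnd ℂ) ζ * ζ = 1 := by
    rw [mul_comm, Complex.mul_conj]
    norm_cast
    rw [Complex.normSq_eq_norm_sq, hζ,
      one_pow]
  have : (1:ℂ) - z * (starRingEnd ℂ) ζ = (starRingEnd ℂ) ζ * (ζ - z) := by
    rw [mul_sub, h1]; ring
  rw [this, norm_mul, RCLike.norm_conj, hζ, one_mul]

lemma clark_rep (b : ℂ → ℂ)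
    (hb : DifferentiableOn ℂ b (ball (0 : ℂ) 1))
    (hbmap : ∀ z ∈ ball (0 : ℂ) 1, b z ∈ ball (0 : ℂ) 1)
    (α : ℂ) (hα : ‖α‖ = 1)
    (σ : Measure ℂ) (hσfin : IsFiniteMeasure σ)
    (hσsupp : σ (sphere (0 : ℂ) 1)ᶜ = 0)
    (hσ : ∀ z ∈ ball (0 : ℂ) 1,
      ∫ ζ, (1 - ‖z‖ ^ 2) / ‖ζ - z‖ ^ 2 ∂σ = (1 - ‖b z‖ ^ 2) / ‖α - b z‖ ^ 2) :
    ∃ C : ℂ, C + (starRingEnd ℂ) C = (((σ univ).toReal - 1 : ℝ) : ℂ) ∧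
      ∀ z ∈ ball (0:ℂ) 1,
        ∫ ζ, (1 - z * (starRingEnd ℂ) ζ)⁻¹ ∂σ = (1 - (starRingEnd ℂ) α * b z)⁻¹ + C := by
  set m : ℝ := (σ univ).toReal with hm
  have haeS : ∀ᵐ ζ ∂σ, ‖ζ‖ = 1 := by
    rw [ae_iff]
    convert hσsupp using 2
    ext ζ
    simp [mem_sphere_iff_norm]
  -- measurability
  have hmeas : ∀ x : ℂ, AEStronglyMeasurable (fun ζ => ((1:ℂ) - x * (starRingEnd ℂ) ζ)⁻¹) σ :=
    fun x => ((measurable_const.sub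
      (measurable_const.mul Complex.continuous_conj.measurable)).inv).aestronglyMeasurable
  -- integrability
  have hint : ∀ x ∈ ball (0:ℂ) 1,
      Integrable (fun ζ => ((1:ℂ) - x * (starRingEnd ℂ) ζ)⁻¹) σ := by
    intro x hx
    rw [mem_ball_zero_iff] at hx
    refine (integrable_const ((1-‖x‖)⁻¹)).mono' (hmeas x) ?_
    filter_upwards [haeS] with ζ hζ
    rw [norm_inv]
    exact inv_anti₀ (by linarith) (norm_one_sub_ge hζ)
  set F : ℂ → ℂ := fun x => ∫ ζ, ((1:ℂ) - x * (starRingEnd ℂ) ζ)⁻¹ ∂σ with hF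
  -- nonvanishing of 1 - conj α * b x
  have hbne : ∀ x ∈ ball (0:ℂ) 1, (1:ℂ) - (starRingEnd ℂ) α * b x ≠ 0 := by
    intro x hx
    apply one_sub_ne
    rw [norm_mul, RCLike.norm_conj, hα, one_mul]
    exact mem_ball_zero_iff.1 (hbmap x hx)
  -- real part identity
  have hRe : ∀ x ∈ ball (0:ℂ) 1,
      2 * (F x).re - m = 2 * (((1:ℂ) - (starRingEnd ℂ) α * b x)⁻¹).re - 1 := by
    intro x hx
    have hx' := mem_ball_zero_iff.1 hx
    have hbx' := mem_ball_zero_iff.1 (hbmap x hx)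
    have hi := hint x hx
    have hcongr : (fun ζ => 2 * (((1:ℂ) - x * (starRingEnd ℂ) ζ)⁻¹).re - 1)
        =ᵐ[σ] fun ζ => (1 - ‖x‖^2)/‖ζ - x‖^2 := by
      filter_upwards [haeS] with ζ hζ
      rw [aux_re _ (one_sub_ne (by rw [norm_prod_eq hζ]; exact hx')),
        norm_prod_eq hζ, norm_one_sub_eq hζ]
    have hi1 : Integrable (fun ζ => (((1:ℂ) - x * (starRingEnd ℂ) ζ)⁻¹).re) σ := hi.re
    have h2 : ∫ ζ, (2 * (((1:ℂ) - x * (starRingEnd ℂ) ζ)⁻¹).re - 1) ∂σ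
        = 2 * (F x).re - m := by
      rw [integral_sub (hi1.const_mul 2) (integrable_const 1), integral_const_mul 2,
        integral_const, smul_eq_mul, mul_one]
      congr 2
      have := integral_re (μ := σ) hi
      simpa using this
    have h3 := integral_congr_ae hcongr
    rw [h2, hσ x hx] at h3
    rw [h3, aux_re _ (hbne x hx)]
    congr 1
    · rw [norm_mul, RCLike.norm_conj, hα, one_mul]
    · have : (1:ℂ) - (starRingEnd ℂ) α * b x = (starRingEnd ℂ) α * (α - b x) := by
        rw [mul_sub]
        congr 1
        rw [mul_comm, Complex.mul_conj]
        norm_cast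
        rw [Complex.normSq_eq_norm_sq, hα, one_pow]
      rw [this, norm_mul, RCLike.norm_conj, hα, one_mul]
  -- differentiability of F
  have hF'meas : ∀ x : ℂ, AEStronglyMeasurable
      (fun ζ => (starRingEnd ℂ) ζ * (((1:ℂ) - x * (starRingEnd ℂ) ζ)^2)⁻¹) σ :=
    fun x => (Complex.continuous_conj.measurable.mul
      (((measurable_const.sub
        (measurable_const.mul Complex.continuous_conj.measurable)).pow_const 2).inv)).aestronglyMeasurable
  have hFdiff : ∀ x₀ ∈ ball (0:ℂ) 1, DifferentiableAt ℂ F x₀ := by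
    intro x₀ hx₀
    have hx₀' := mem_ball_zero_iff.1 hx₀
    set ε : ℝ := (1 - ‖x₀‖)/2 with hεdef
    have hεpos : 0 < ε := by rw [hεdef]; linarith
    have hxball : ∀ x ∈ ball x₀ ε, ‖x‖ < 1 ∧ ε ≤ 1 - ‖x‖ := by
      intro x hxb
      have hd : ‖x - x₀‖ < ε := by rwa [mem_ball, dist_eq_norm] at hxb
      have h1 : ‖x‖ ≤ ‖x₀‖ + ‖x - x₀‖ := by
        calc ‖x‖ = ‖x₀ + (x - x₀)‖ := by ring_nf
        _ ≤ _ := norm_add_le _ _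
      rw [hεdef] at *
      constructor <;> linarith
    have key := hasDerivAt_integral_of_dominated_loc_of_deriv_le (μ := σ)
      (F := fun x ζ => ((1:ℂ) - x * (starRingEnd ℂ) ζ)⁻¹)
      (F' := fun x ζ => (starRingEnd ℂ) ζ * (((1:ℂ) - x * (starRingEnd ℂ) ζ)^2)⁻¹)
      (x₀ := x₀) (bound := fun _ => (ε^2)⁻¹) (ball_mem_nhds x₀ hεpos)
      (Filter.Eventually.of_forall fun x => hmeas x) (hint x₀ hx₀) (hF'meas x₀)
      ?_ (integrable_const _) ?_
    · exact key.2.differentiableAt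
    · filter_upwards [haeS] with ζ hζ
      intro x hxb
      obtain ⟨h1, h2⟩ := hxball x hxb
      rw [norm_mul, RCLike.norm_conj, hζ, one_mul, norm_inv, norm_pow]
      have h3 : ε ≤ ‖1 - x * (starRingEnd ℂ) ζ‖ := le_trans h2 (norm_one_sub_ge hζ)
      exact inv_anti₀ (by positivity) (by
        apply pow_le_pow_left₀ (le_of_lt hεpos) h3)
    · filter_upwards [haeS] with ζ hζ
      intro x hxb
      obtain ⟨h1, _⟩ := hxball x hxb
      have h0 : (1:ℂ) - x * (starRingEnd ℂ) ζ ≠ 0 :=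
        one_sub_ne (by rw [norm_prod_eq hζ]; exact h1)
      have haff : HasDerivAt (fun y : ℂ => (1:ℂ) - y * (starRingEnd ℂ) ζ)
          (-(starRingEnd ℂ) ζ) x := by
        simpa using ((hasDerivAt_id x).mul_const ((starRingEnd ℂ) ζ)).const_sub 1
      have hinv := haff.inv h0
      have e : (starRingEnd ℂ) ζ * ((1 - x * (starRingEnd ℂ) ζ) ^ 2)⁻¹
          = - -(starRingEnd ℂ) ζ / (1 - x * (starRingEnd ℂ) ζ) ^ 2 := by
        rw [div_eq_mul_inv, neg_neg]
      rw [e]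
      exact hinv
  -- the function f = F - (1 - conj α * b)⁻¹ is constant on the ball
  have hGdiff : DifferentiableOn ℂ (fun x => ((1:ℂ) - (starRingEnd ℂ) α * b x)⁻¹)
      (ball (0:ℂ) 1) :=
    ((differentiableOn_const 1).sub (hb.const_mul _)).inv hbne
  set f : ℂ → ℂ := fun x => F x - ((1:ℂ) - (starRingEnd ℂ) α * b x)⁻¹ with hfdef
  have hFdiffOn : DifferentiableOn ℂ F (ball (0:ℂ) 1) :=
    fun x hx => (hFdiff x hx).differentiableWithinAt
  have hf_diff : DifferentiableOn ℂ f (ball (0:ℂ) 1) := hFdiffOn.sub hGdiff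
  have hf_re : ∀ x ∈ ball (0:ℂ) 1, (f x).re = (m-1)/2 := by
    intro x hx
    have := hRe x hx
    simp only [hfdef, Complex.sub_re]
    linarith
  have hconst : ∀ x ∈ ball (0:ℂ) 1, f x = f 0 := by
    intro x hx
    apply (convex_ball (0:ℂ) 1).is_const_of_fderivWithin_eq_zero hf_diff ?_ hx
      (mem_ball_self one_pos)
    intro y hy
    rw [fderivWithin_of_isOpen isOpen_ball hy]
    have hdy : DifferentiableAt ℂ f y :=
      (hFdiff y hy).sub (hGdiff.differentiableAt (isOpen_ball.mem_nhds hy))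
    set d := deriv f y with hd
    have hD : HasFDerivAt f (ContinuousLinearMap.smulRight (1 : ℂ →L[ℂ] ℂ) d) y := by
      rw [ContinuousLinearMap.smulRight_one_eq_toSpanSingleton, ← hasDerivAt_iff_hasFDerivAt]
      exact hdy.hasDerivAt
    have hre0 : fderiv ℝ (fun w => (f w).re) y = 0 := by
      have hev : (fun w => (f w).re) =ᶠ[nhds y] fun _ => (m-1)/2 := by
        filter_upwards [isOpen_ball.mem_nhds hy] with w hw using hf_re w hw
      rw [Filter.EventuallyEq.fderiv_eq hev]
      exact fderiv_const_apply _
    have hcomp : HasFDerivAt (fun w => (f w).re)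
        ((Complex.reCLM : ℂ →L[ℝ] ℝ).comp
          ((ContinuousLinearMap.smulRight (1 : ℂ →L[ℂ] ℂ) d).restrictScalars ℝ)) y :=
      (Complex.reCLM.hasFDerivAt).comp y (hD.restrictScalars ℝ)
    have heq := hcomp.fderiv
    rw [hre0] at heq
    have h1 : d.re = 0 := by
      have := DFunLike.congr_fun heq.symm (1:ℂ)
      simpa using this
    have h2 : d.im = 0 := by
      have := DFunLike.congr_fun heq.symm (Complex.I)
      simpa using this
    have hd0 : d = 0 := Complex.ext h1 h2
    have := hD.fderiv
    rw [this, hd0]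
    ext v
    simp
  refine ⟨f 0, ?_, ?_⟩
  · have h0 : (f 0).re = (m-1)/2 := hf_re 0 (mem_ball_self one_pos)
    rw [Complex.add_conj, h0]
    push_cast
    ring
  · intro z hz
    have := hconst z hz
    have hFz : F z = ((1:ℂ) - (starRingEnd ℂ) α * b z)⁻¹ + f 0 := by
      rw [← this, hfdef]; ring
    exact hFz

/-- With `σ_α` the Clark measure of `b` and `(V g)(z) = (1 - conj α · b z) (g σ_α)₊(z)`,
one has `V C(·,w) = (1 - α conj (b w))⁻¹ k_b(·,w)` for every `w` in the disc, where
`C(ζ,w) = (1 - ζ conj w)⁻¹` and `k_b(z,w) = (1 - b z conj (b w))/(1 - z conj w)`. -/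
theorem stmt5 (b : ℂ → ℂ)
    (hb : DifferentiableOn ℂ b (ball (0 : ℂ) 1))
    (hbmap : ∀ z ∈ ball (0 : ℂ) 1, b z ∈ ball (0 : ℂ) 1)
    (α : ℂ) (hα : ‖α‖ = 1)
    (σ : Measure ℂ) (hσfin : IsFiniteMeasure σ)
    (hσsupp : σ (sphere (0 : ℂ) 1)ᶜ = 0)
    (hσ : ∀ z ∈ ball (0 : ℂ) 1,
      ∫ ζ, (1 - ‖z‖ ^ 2) / ‖ζ - z‖ ^ 2 ∂σ = (1 - ‖b z‖ ^ 2) / ‖α - b z‖ ^ 2) :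
    ∀ w ∈ ball (0 : ℂ) 1, ∀ z ∈ ball (0 : ℂ) 1,
      (1 - (starRingEnd ℂ) α * b z) *
          ∫ ζ, (1 - ζ * (starRingEnd ℂ) w)⁻¹ * (1 - z * (starRingEnd ℂ) ζ)⁻¹ ∂σ =
        (1 - α * (starRingEnd ℂ) (b w))⁻¹ *
          ((1 - b z * (starRingEnd ℂ) (b w)) * (1 - z * (starRingEnd ℂ) w)⁻¹) := by
  intro w hw z hz
  obtain ⟨C, hC, hrep⟩ := clark_rep b hb hbmap α hα σ hσfin hσsupp hσ
  set m : ℝ := (σ univ).toReal with hm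
  have hw' := mem_ball_zero_iff.1 hw
  have hz' := mem_ball_zero_iff.1 hz
  have hbw' := mem_ball_zero_iff.1 (hbmap w hw)
  have hbz' := mem_ball_zero_iff.1 (hbmap z hz)
  have haeS : ∀ᵐ ζ ∂σ, ‖ζ‖ = 1 := by
    rw [ae_iff]
    convert hσsupp using 2
    ext ζ
    simp [mem_sphere_iff_norm]
  -- nonvanishing facts
  have hD : (1:ℂ) - z * (starRingEnd ℂ) w ≠ 0 := by
    apply one_sub_ne
    rw [norm_mul, RCLike.norm_conj]
    nlinarith [norm_nonneg z, norm_nonneg w]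
  have hbnez : (1:ℂ) - (starRingEnd ℂ) α * b z ≠ 0 := by
    apply one_sub_ne
    rwa [norm_mul, RCLike.norm_conj, hα, one_mul]
  have hbnew : (1:ℂ) - α * (starRingEnd ℂ) (b w) ≠ 0 := by
    apply one_sub_ne
    rwa [norm_mul, RCLike.norm_conj, hα, one_mul]
  -- integrability
  have hmeasB : AEStronglyMeasurable (fun ζ => ((1:ℂ) - z * (starRingEnd ℂ) ζ)⁻¹) σ :=
    ((measurable_const.sub
      (measurable_const.mul Complex.continuous_conj.measurable)).inv).aestronglyMeasurable
  have hmeasA : AEStronglyMeasurable (fun ζ => ((1:ℂ) - ζ * (starRingEnd ℂ) w)⁻¹) σ :=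
    ((measurable_const.sub
      (measurable_id.mul_const _)).inv).aestronglyMeasurable
  have hnormA : ∀ {ζ : ℂ}, ‖ζ‖ = 1 → 1 - ‖w‖ ≤ ‖(1:ℂ) - ζ * (starRingEnd ℂ) w‖ := by
    intro ζ hζ
    have h1 : ((1:ℂ) - ζ * (starRingEnd ℂ) w) = (starRingEnd ℂ) ((1:ℂ) - w * (starRingEnd ℂ) ζ) := by
      simp only [map_sub, map_one, map_mul, Complex.conj_conj]
      ring
    rw [h1, RCLike.norm_conj]
    exact norm_one_sub_ge hζ
  have hintB : Integrable (fun ζ => ((1:ℂ) - z * (starRingEnd ℂ) ζ)⁻¹) σ := by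
    refine (integrable_const ((1-‖z‖)⁻¹)).mono' hmeasB ?_
    filter_upwards [haeS] with ζ hζ
    rw [norm_inv]
    exact inv_anti₀ (by linarith) (norm_one_sub_ge hζ)
  have hintA : Integrable (fun ζ => ((1:ℂ) - ζ * (starRingEnd ℂ) w)⁻¹) σ := by
    refine (integrable_const ((1-‖w‖)⁻¹)).mono' hmeasA ?_
    filter_upwards [haeS] with ζ hζ
    rw [norm_inv]
    exact inv_anti₀ (by linarith) (hnormA hζ)
  have hintP : Integrable
      (fun ζ => ((1:ℂ) - ζ * (starRingEnd ℂ) w)⁻¹ * ((1:ℂ) - z * (starRingEnd ℂ) ζ)⁻¹) σ := by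
    refine (integrable_const ((1-‖w‖)⁻¹ * (1-‖z‖)⁻¹)).mono' (hmeasA.mul hmeasB) ?_
    filter_upwards [haeS] with ζ hζ
    rw [norm_mul, norm_inv, norm_inv]
    have h1 := inv_anti₀ (show (0:ℝ) < 1 - ‖w‖ by linarith) (hnormA hζ)
    have h2 := inv_anti₀ (show (0:ℝ) < 1 - ‖z‖ by linarith) (norm_one_sub_ge hζ)
    have p1 : (0:ℝ) ≤ ‖((1:ℂ) - ζ * (starRingEnd ℂ) w)‖⁻¹ := by positivity
    have p2 : (0:ℝ) ≤ ‖((1:ℂ) - z * (starRingEnd ℂ) ζ)‖⁻¹ := by positivity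
    exact mul_le_mul h1 h2 p2 (inv_pos.mpr (by linarith)).le
  -- pointwise kernel identity
  have hkernel : (fun ζ => ((1:ℂ) - ζ * (starRingEnd ℂ) w)⁻¹ * ((1:ℂ) - z * (starRingEnd ℂ) ζ)⁻¹)
      =ᵐ[σ] fun ζ => ((1:ℂ) - z * (starRingEnd ℂ) w)⁻¹ *
        (((1:ℂ) - z * (starRingEnd ℂ) ζ)⁻¹ + (((1:ℂ) - ζ * (starRingEnd ℂ) w)⁻¹ - 1)) := by
    filter_upwards [haeS] with ζ hζ
    have hζ1 : ζ * (starRingEnd ℂ) ζ = 1 := by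
      rw [Complex.mul_conj]
      norm_cast
      rw [Complex.normSq_eq_norm_sq, hζ,
        one_pow]
    have hA : (1:ℂ) - ζ * (starRingEnd ℂ) w ≠ 0 := by
      apply one_sub_ne
      rw [norm_mul, RCLike.norm_conj, hζ, one_mul]; exact hw'
    have hB : (1:ℂ) - z * (starRingEnd ℂ) ζ ≠ 0 := by
      apply one_sub_ne
      rw [norm_prod_eq hζ]; exact hz'
    have hDe : (1:ℂ) - z * (starRingEnd ℂ) w = ((1:ℂ) - ζ * (starRingEnd ℂ) w) + ((1:ℂ) - z * (starRingEnd ℂ) ζ)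
        - ((1:ℂ) - ζ * (starRingEnd ℂ) w) * ((1:ℂ) - z * (starRingEnd ℂ) ζ) := by
      linear_combination (z * (starRingEnd ℂ) w) * hζ1
    have hE : ((1:ℂ) - z * (starRingEnd ℂ) ζ)⁻¹ + (((1:ℂ) - ζ * (starRingEnd ℂ) w)⁻¹ - 1)
        = ((1:ℂ) - z * (starRingEnd ℂ) w) *
          (((1:ℂ) - ζ * (starRingEnd ℂ) w)⁻¹ * ((1:ℂ) - z * (starRingEnd ℂ) ζ)⁻¹) := by
      rw [hDe]
      field_simp
      ring
    rw [hE, ← mul_assoc, inv_mul_cancel₀ hD, one_mul]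
  have hαc : α * (starRingEnd ℂ) α = 1 := by
    rw [Complex.mul_conj]
    norm_cast
    rw [Complex.normSq_eq_norm_sq, hα,
      one_pow]
  have hsplit : ∫ ζ, ((1:ℂ) - ζ * (starRingEnd ℂ) w)⁻¹ * ((1:ℂ) - z * (starRingEnd ℂ) ζ)⁻¹ ∂σ
      = ((1:ℂ) - z * (starRingEnd ℂ) w)⁻¹ *
        ((∫ ζ, ((1:ℂ) - z * (starRingEnd ℂ) ζ)⁻¹ ∂σ) +
          ((∫ ζ, ((1:ℂ) - ζ * (starRingEnd ℂ) w)⁻¹ ∂σ) - (m:ℂ))) := by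
    have hint2 : Integrable (fun ζ => ((1:ℂ) - ζ * (starRingEnd ℂ) w)⁻¹ - 1) σ :=
      hintA.sub (integrable_const 1)
    rw [integral_congr_ae hkernel, integral_const_mul]
    congr 1
    rw [integral_add hintB hint2, integral_sub hintA (integrable_const 1), integral_const]
    simp [smul_eq_mul, hm, measureReal_def]
  have hFz := hrep z hz
  have hGw : ∫ ζ, ((1:ℂ) - ζ * (starRingEnd ℂ) w)⁻¹ ∂σ
      = ((1:ℂ) - α * (starRingEnd ℂ) (b w))⁻¹ + (starRingEnd ℂ) C := by
    have h1 : ∀ ζ : ℂ, ((1:ℂ) - ζ * (starRingEnd ℂ) w)⁻¹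
        = (starRingEnd ℂ) (((1:ℂ) - w * (starRingEnd ℂ) ζ)⁻¹) := by
      intro ζ
      rw [map_inv₀, map_sub, map_one, map_mul, Complex.conj_conj]
      ring_nf
    calc ∫ ζ, ((1:ℂ) - ζ * (starRingEnd ℂ) w)⁻¹ ∂σ
        = ∫ ζ, (starRingEnd ℂ) (((1:ℂ) - w * (starRingEnd ℂ) ζ)⁻¹) ∂σ := by simp_rw [h1]
      _ = (starRingEnd ℂ) (∫ ζ, ((1:ℂ) - w * (starRingEnd ℂ) ζ)⁻¹ ∂σ) := integral_conj
      _ = _ := by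
          rw [hrep w hw, map_add, map_inv₀, map_sub, map_one, map_mul, Complex.conj_conj]
  rw [hsplit, hFz, hGw]
  have hsum : ((1:ℂ) - (starRingEnd ℂ) α * b z)⁻¹ + C +
      (((1:ℂ) - α * (starRingEnd ℂ) (b w))⁻¹ + (starRingEnd ℂ) C - (m:ℂ))
      = ((1:ℂ) - (starRingEnd ℂ) α * b z)⁻¹ + ((1:ℂ) - α * (starRingEnd ℂ) (b w))⁻¹ - 1 := by
    push_cast at hC
    linear_combination hC
  rw [hsum]
  have key : (1:ℂ) - b z * (starRingEnd ℂ) (b w)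
      = ((1:ℂ) - (starRingEnd ℂ) α * b z) + ((1:ℂ) - α * (starRingEnd ℂ) (b w))
        - ((1:ℂ) - (starRingEnd ℂ) α * b z) * ((1:ℂ) - α * (starRingEnd ℂ) (b w)) := by
    linear_combination (b z * (starRingEnd ℂ) (b w)) * hαc
  rw [key]
  field_simp
  ring
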